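/- arXiv:cs/0410013 — 5 statements merged into one kernel-verified Lean document; each statement's English description precedes it below -/
import Mathlib

section
/- Let k ≥ 0 and define p(1) = 1, p(i) = F(i-1) for 2 ≤ i ≤ k+3, and p(i) = F(i-1) + F(i-k-3) for i ≥ k+4. Then for every i with k+4 ≤ i, the identity p(i) = 1 + p(1) + p(2) + ... + p(i-2) holds. -/
/-- For the minimizing k-ordered sequence, each weight p(i) with i ≥ k+4 exceeds the sum
of all earlier weights p(1)+...+p(i-2) by exactly one. -/
theorem min_k_ordered_sum_identity (k : ℕ) (p : ℕ → ℕ)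
    (hp1 : p 1 = 1)
    (hpF : ∀ i : ℕ, 2 ≤ i → i ≤ k + 3 → p i = Nat.fib (i - 1))
    (hpW : ∀ i : ℕ, k + 4 ≤ i → p i = Nat.fib (i - 1) + Nat.fib (i - k - 3)) :
    ∀ i : ℕ, k + 4 ≤ i → p i = 1 + ∑ j ∈ Finset.Icc 1 (i - 2), p j := by
  -- helper: partial sums of the Fibonacci prefix
  have hsum : ∀ m : ℕ, 1 ≤ m → m ≤ k + 2 →
      (∑ j ∈ Finset.Icc 1 m, p j) = Nat.fib (m + 1) := by
    intro m
    induction m with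
    | zero => intro h; omega
    | succ n ih =>
      intro _ hle
      rcases Nat.eq_zero_or_pos n with hn | hn
      · subst hn; simp [hp1]
      · rw [Finset.sum_Icc_succ_top (by omega : 1 ≤ n + 1), ih hn (by omega),
          hpF (n + 1) (by omega) (by omega)]
        rw [show n + 1 + 1 = n + 2 from by omega, show n + 1 - 1 = n from by omega,
          Nat.fib_add_two]
        ring
  intro i hi
  induction i, hi using Nat.le_induction with
  | base =>
    rw [hpW (k + 4) le_rfl,
      show k + 4 - 2 = k + 2 from by omega, hsum (k + 2) (by omega) le_rfl,
      show k + 4 - 1 = k + 3 from by omega, show k + 4 - k - 3 = 1 from by omega,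
      show k + 2 + 1 = k + 3 from by omega, Nat.fib_one]
    ring
  | succ i hi ih =>
    rw [show i + 1 - 2 = (i - 2) + 1 from by omega,
      Finset.sum_Icc_succ_top (by omega : 1 ≤ i - 2 + 1), ← add_assoc, ← ih,
      show i - 2 + 1 = i - 1 from by omega]
    -- goal : p (i+1) = p i + p (i-1)
    rcases Nat.lt_or_ge i (k + 5) with h5 | h5
    · -- i = k + 4
      have hik : i = k + 4 := by omega
      subst hik
      rw [hpW (k + 4 + 1) (by omega), hpW (k + 4) le_rfl,
        hpF (k + 4 - 1) (by omega) (by omega)]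
      rw [show k + 4 + 1 - 1 = (k + 2) + 2 from by omega,
        show k + 4 + 1 - k - 3 = 2 from by omega,
        show k + 4 - 1 = k + 3 from by omega,
        show k + 4 - k - 3 = 1 from by omega,
        show k + 3 - 1 = k + 2 from by omega,
        Nat.fib_add_two]
      simp [Nat.fib_one, Nat.fib_two]
      ring
    · -- i ≥ k + 5
      obtain ⟨t, rfl⟩ : ∃ t, i = t + (k + 5) := ⟨i - (k + 5), by omega⟩
      rw [hpW (t + (k + 5) + 1) (by omega), hpW (t + (k + 5)) (by omega),
        hpW (t + (k + 5) - 1) (by omega)]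
      have key : ∀ a b : ℕ, Nat.fib (a + 2) + Nat.fib (b + 2) =
          Nat.fib (a + 1) + Nat.fib (b + 1) + (Nat.fib a + Nat.fib b) := by
        intro a b
        rw [Nat.fib_add_two, Nat.fib_add_two]
        ring
      rw [show t + (k + 5) + 1 - 1 = (t + k + 3) + 2 from by omega,
        show t + (k + 5) + 1 - k - 3 = (t + 1) + 2 from by omega,
        show t + (k + 5) - 1 = (t + k + 3) + 1 from by omega,
        show t + (k + 5) - k - 3 = (t + 1) + 1 from by omega,
        show t + k + 3 + 1 - 1 = t + k + 3 from by omega,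
        show t + k + 3 + 1 - k - 3 = t + 1 from by omega]
      exact key _ _
end

section
/- For every integer n ≥ 2, (n-1)·F(1) + ∑_{i=2}^{n} (n - i + 1) · F(i) = F(n+4) - (n+4). -/
lemma fib_sum_Icc (n : ℕ) (hn : 2 ≤ n) :
    ∑ i ∈ Finset.Icc 2 n, (Nat.fib i : ℤ) = Nat.fib (n + 2) - 2 := by
  induction n, hn using Nat.le_induction with
  | base => decide
  | succ n hn ih =>
    rw [Finset.sum_Icc_succ_top (by omega), ih]
    have h : (Nat.fib (n + 1 + 2) : ℤ) = Nat.fib (n + 1) + Nat.fib (n + 2) := by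
      rw [show n + 1 + 2 = (n + 1) + 2 from rfl, Nat.fib_add_two]; push_cast; ring
    linarith [h]

/-- For n ≥ 2, (n-1)·F(1) + ∑_{i=2}^{n} (n-i+1)·F(i) = F(n+4) - (n+4). -/
theorem fib_external_path_length (n : ℕ) (hn : 2 ≤ n) :
    ((n : ℤ) - 1) * Nat.fib 1 + ∑ i ∈ Finset.Icc 2 n, ((n : ℤ) - i + 1) * Nat.fib i
      = (Nat.fib (n + 4) : ℤ) - (n + 4) := by
  induction n, hn using Nat.le_induction with
  | base => decide
  | succ n hn ih =>
    rw [Finset.sum_Icc_succ_top (by omega)]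
    have hsplit : ∑ i ∈ Finset.Icc 2 n, (((n : ℤ) + 1) - i + 1) * Nat.fib i
        = (∑ i ∈ Finset.Icc 2 n, ((n : ℤ) - i + 1) * Nat.fib i)
          + ∑ i ∈ Finset.Icc 2 n, (Nat.fib i : ℤ) := by
      rw [← Finset.sum_add_distrib]
      exact Finset.sum_congr rfl fun i _ => by ring
    push_cast [hsplit, fib_sum_Icc n hn]
    have h1 : (Nat.fib (n + 1 + 4) : ℤ) = Nat.fib (n + 4) + Nat.fib (n + 3) := by
      rw [show n + 1 + 4 = (n + 3) + 2 by ring, Nat.fib_add_two]; push_cast; ring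
    have h2 : (Nat.fib (n + 3) : ℤ) = Nat.fib (n + 2) + Nat.fib (n + 1) := by
      rw [show n + 3 = (n + 1) + 2 by ring, Nat.fib_add_two]; push_cast; ring
    have h3 : ((n : ℤ) + 1 - (n + 1) + 1) = 1 := by ring
    have h4 : ((n : ℤ) + 1 - ((n : ℤ) + 1) + 1) * Nat.fib (n + 1) = Nat.fib (n + 1) := by ring
    rw [h1, h2]
    simp only [Nat.fib_one, Nat.cast_one, mul_one] at ih ⊢
    linarith [ih, h4]
end

section
/- For every integer n ≥ 3, (n-1)·1 + ∑_{i=2}^{n} (n - i + 1) · F(i-1) = F(n+3) - 3. -/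
lemma fib_icc_sum (n : ℕ) (h : 2 ≤ n) :
    ∑ i ∈ Finset.Icc 2 n, (Nat.fib (i - 1) : ℤ) = Nat.fib (n + 1) - 1 := by
  induction n, h using Nat.le_induction with
  | base => decide
  | succ n hn ih =>
    rw [Finset.sum_Icc_succ_top (by omega : 2 ≤ n + 1), ih]
    have : n + 1 - 1 = n := by omega
    rw [this]
    have : Nat.fib (n + 2) = Nat.fib n + Nat.fib (n + 1) := Nat.fib_add_two
    push_cast [this]
    ring

/-- For n ≥ 3, (n-1)·1 + ∑_{i=2}^{n} (n-i+1)·F(i-1) = F(n+3) - 3. -/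
theorem shifted_fib_external_path_length (n : ℕ) (hn : 3 ≤ n) :
    ((n : ℤ) - 1) * 1 + ∑ i ∈ Finset.Icc 2 n, ((n : ℤ) - i + 1) * Nat.fib (i - 1)
      = (Nat.fib (n + 3) : ℤ) - 3 := by
  induction n, hn using Nat.le_induction with
  | base => decide
  | succ n hn ih =>
    rw [Finset.sum_Icc_succ_top (by omega : 2 ≤ n + 1)]
    have hsplit : ∑ i ∈ Finset.Icc 2 n, (((n : ℤ) + 1) - i + 1) * Nat.fib (i - 1)
        = ∑ i ∈ Finset.Icc 2 n, ((n : ℤ) - i + 1) * Nat.fib (i - 1)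
          + ∑ i ∈ Finset.Icc 2 n, (Nat.fib (i - 1) : ℤ) := by
      rw [← Finset.sum_add_distrib]
      exact Finset.sum_congr rfl fun i _ => by ring
    have hfs := fib_icc_sum n (by omega)
    have h1 : n + 1 - 1 = n := by omega
    have h2 : Nat.fib (n + 1 + 3) = Nat.fib (n + 2) + Nat.fib (n + 3) := Nat.fib_add_two
    have h3 : Nat.fib (n + 2) = Nat.fib n + Nat.fib (n + 1) := Nat.fib_add_two
    push_cast [h1, h2, h3] at *
    linarith [hsplit, hfs, ih]
end

section
/- Fix integers n ≥ 3 and k with 0 ≤ k ≤ n-3. Define p(1) = 1, p(i) = F(i-1) for 2 ≤ i ≤ k+3, and p(i) = F(i-1) + F(i-k-3) for k+4 ≤ i ≤ n. Then (n-1)·p(1) + ∑_{i=2}^{n} (n - i + 1)·p(i) = F(n+3) + F(n-k+1) - (n - k + 3). -/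
lemma fib_partial_sum (m : ℕ) :
    ∑ j ∈ Finset.range m, (Nat.fib (j+1) : ℤ) = Nat.fib (m+2) - 1 := by
  induction m with
  | zero => simp
  | succ m ih =>
    rw [Finset.sum_range_succ, ih]
    have h : (Nat.fib (m+3) : ℤ) = Nat.fib (m+1) + Nat.fib (m+2) := by
      have := Nat.fib_add_two (n := m+1)
      push_cast [this]; ring
    have h2 : m + 1 + 2 = m + 3 := by omega
    rw [h2, h]; ring

lemma fib_weighted_sum (m : ℕ) :
    ∑ j ∈ Finset.range m, ((m : ℤ) - j) * Nat.fib (j+1)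
      = Nat.fib (m+4) - m - 3 := by
  induction m with
  | zero =>
    have : Nat.fib 4 = 3 := by decide
    simp [this]
  | succ m ih =>
    have step : ∑ j ∈ Finset.range (m+1), ((↑(m+1) : ℤ) - j) * Nat.fib (j+1)
        = (∑ j ∈ Finset.range (m+1), ((m : ℤ) - j) * Nat.fib (j+1))
          + ∑ j ∈ Finset.range (m+1), (Nat.fib (j+1) : ℤ) := by
      rw [← Finset.sum_add_distrib]
      refine Finset.sum_congr rfl fun j _ => ?_
      push_cast; ring
    rw [step, Finset.sum_range_succ (f := fun j => ((m : ℤ) - j) * Nat.fib (j+1)), ih,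
      fib_partial_sum]
    have h : (Nat.fib (m+5) : ℤ) = Nat.fib (m+3) + Nat.fib (m+4) := by
      have := Nat.fib_add_two (n := m+3)
      push_cast [this]; ring
    have h2 : m + 1 + 4 = m + 5 := by omega
    rw [h2, h]
    push_cast; ring

lemma sum_Icc_shift (f : ℕ → ℤ) (a b : ℕ) :
    ∑ i ∈ Finset.Icc a b, f i = ∑ j ∈ Finset.range (b + 1 - a), f (a + j) := by
  rw [← Finset.Ico_add_one_right_eq_Icc, Finset.sum_Ico_eq_sum_range]

/-- The weighted external path length of the left-sided elongated tree for the minimizing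
k-ordered sequence equals F(n+3) + F(n-k+1) - (n-k+3). -/
theorem min_k_ordered_huffman_cost (n k : ℕ) (hn : 3 ≤ n) (hk : k ≤ n - 3)
    (p : ℕ → ℕ)
    (hp1 : p 1 = 1)
    (hpF : ∀ i : ℕ, 2 ≤ i → i ≤ k + 3 → p i = Nat.fib (i - 1))
    (hpW : ∀ i : ℕ, k + 4 ≤ i → i ≤ n → p i = Nat.fib (i - 1) + Nat.fib (i - k - 3)) :
    ((n : ℤ) - 1) * p 1 + ∑ i ∈ Finset.Icc 2 n, ((n : ℤ) - i + 1) * p i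
      = (Nat.fib (n + 3) : ℤ) + Nat.fib (n - k + 1) - ((n : ℤ) - k + 3) := by
  have hkn : k + 3 ≤ n := by omega
  -- split the sum at k+3
  have hsplit : ∀ f : ℕ → ℤ,
      ∑ i ∈ Finset.Icc 2 n, f i
        = ∑ i ∈ Finset.Icc 2 (k+3), f i + ∑ i ∈ Finset.Icc (k+4) n, f i := by
    intro f
    have h1 : Finset.Icc 2 n = Finset.Ioc 1 n := (Finset.Icc_add_one_left_eq_Ioc 1 n)
    have h2 : Finset.Icc 2 (k+3) = Finset.Ioc 1 (k+3) := (Finset.Icc_add_one_left_eq_Ioc 1 (k+3))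
    have h3 : Finset.Icc (k+4) n = Finset.Ioc (k+3) n := (Finset.Icc_add_one_left_eq_Ioc (k+3) n)
    rw [h1, h2, h3, Finset.sum_Ioc_consecutive f (by omega : 1 ≤ k+3) hkn]
  -- rewrite p on each piece
  have e1 : ∑ i ∈ Finset.Icc 2 (k+3), ((n : ℤ) - i + 1) * p i
      = ∑ i ∈ Finset.Icc 2 (k+3), ((n : ℤ) - i + 1) * Nat.fib (i - 1) := by
    refine Finset.sum_congr rfl fun i hi => ?_
    rw [Finset.mem_Icc] at hi
    rw [hpF i hi.1 hi.2]
  have e2 : ∑ i ∈ Finset.Icc (k+4) n, ((n : ℤ) - i + 1) * p i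
      = ∑ i ∈ Finset.Icc (k+4) n, ((n : ℤ) - i + 1) * Nat.fib (i - 1)
        + ∑ i ∈ Finset.Icc (k+4) n, ((n : ℤ) - i + 1) * Nat.fib (i - k - 3) := by
    rw [← Finset.sum_add_distrib]
    refine Finset.sum_congr rfl fun i hi => ?_
    rw [Finset.mem_Icc] at hi
    rw [hpW i hi.1 hi.2]
    push_cast; ring
  -- value of the fib (i-1) sum over Icc 2 n
  have A : ∑ i ∈ Finset.Icc 2 n, ((n : ℤ) - i + 1) * Nat.fib (i - 1)
      = Nat.fib (n + 3) - n - 2 := by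
    rw [sum_Icc_shift]
    have hr : n + 1 - 2 = n - 1 := by omega
    rw [hr]
    have := fib_weighted_sum (n - 1)
    have hc : ∑ j ∈ Finset.range (n-1), ((n : ℤ) - ((2 + j : ℕ) : ℤ) + 1) * Nat.fib (2 + j - 1)
        = ∑ j ∈ Finset.range (n-1), ((↑(n-1) : ℤ) - j) * Nat.fib (j + 1) := by
      refine Finset.sum_congr rfl fun j _ => ?_
      have h1 : 2 + j - 1 = j + 1 := by omega
      have h2 : ((n - 1 : ℕ) : ℤ) = (n : ℤ) - 1 := by
        push_cast [Nat.cast_sub (by omega : 1 ≤ n)]; ring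
      rw [h1, h2]; push_cast; ring
    rw [hc, this]
    have h3 : n - 1 + 4 = n + 3 := by omega
    rw [h3]
    have h2 : ((n - 1 : ℕ) : ℤ) = (n : ℤ) - 1 := by
      push_cast [Nat.cast_sub (by omega : 1 ≤ n)]; ring
    rw [h2]; ring
  -- value of the fib (i-k-3) sum over Icc (k+4) n
  have B : ∑ i ∈ Finset.Icc (k+4) n, ((n : ℤ) - i + 1) * Nat.fib (i - k - 3)
      = Nat.fib (n - k + 1) - (n : ℤ) + k := by
    rw [sum_Icc_shift]
    have hr : n + 1 - (k + 4) = n - k - 3 := by omega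
    rw [hr]
    have := fib_weighted_sum (n - k - 3)
    have hc : ∑ j ∈ Finset.range (n-k-3), ((n : ℤ) - ((k + 4 + j : ℕ) : ℤ) + 1) * Nat.fib (k + 4 + j - k - 3)
        = ∑ j ∈ Finset.range (n-k-3), ((↑(n-k-3) : ℤ) - j) * Nat.fib (j + 1) := by
      refine Finset.sum_congr rfl fun j _ => ?_
      have h1 : k + 4 + j - k - 3 = j + 1 := by omega
      have h2 : ((n - k - 3 : ℕ) : ℤ) = (n : ℤ) - k - 3 := by
        have : ((n - k - 3 : ℕ) : ℤ) = ((n : ℤ)) - ((k + 3 : ℕ) : ℤ) := by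
          rw [← Nat.cast_sub hkn]; congr 1
        rw [this]; push_cast; try ring
      rw [h1, h2]; push_cast; ring
    rw [hc, this]
    have h3 : n - k - 3 + 4 = n - k + 1 := by omega
    rw [h3]
    have h2 : ((n - k - 3 : ℕ) : ℤ) = (n : ℤ) - k - 3 := by
      have : ((n - k - 3 : ℕ) : ℤ) = ((n : ℤ)) - ((k + 3 : ℕ) : ℤ) := by
        rw [← Nat.cast_sub hkn]; congr 1
      rw [this]; push_cast; try ring
    rw [h2]; ring
  rw [hsplit (fun i => ((n : ℤ) - i + 1) * p i), e1, e2, hp1]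
  have recomb : ∑ i ∈ Finset.Icc 2 (k+3), ((n : ℤ) - i + 1) * Nat.fib (i - 1)
      + ∑ i ∈ Finset.Icc (k+4) n, ((n : ℤ) - i + 1) * Nat.fib (i - 1)
      = Nat.fib (n + 3) - n - 2 := by
    rw [← hsplit (fun i => ((n : ℤ) - i + 1) * Nat.fib (i - 1)), A]
  push_cast
  linarith [recomb, B]
end

section
/- For every integer n ≥ 3, (n-1)·1 + (n-1)·1 + ∑_{i=3}^{n} (n - i + 1)·L(i-2) = F(n+3) + F(n+1) - (n+3), where L is the Lucas sequence. -/
private lemma fibrec (m : ℕ) : Nat.fib (m + 2) = Nat.fib m + Nat.fib (m + 1) :=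
  Nat.fib_add_two

private lemma Lfib (L : ℕ → ℕ) (hL1 : L 1 = 1) (hL2 : L 2 = 3)
    (hLrec : ∀ m : ℕ, 1 ≤ m → L (m + 2) = L (m + 1) + L m) :
    ∀ k : ℕ, L (k + 1) = Nat.fib (k + 2) + Nat.fib k ∧
      L (k + 2) = Nat.fib (k + 3) + Nat.fib (k + 1) := by
  intro k
  induction k with
  | zero => refine ⟨by simpa using hL1, by simpa [show Nat.fib 3 = 2 from rfl] using hL2⟩
  | succ k ih =>
    obtain ⟨h1, h2⟩ := ih
    refine ⟨h2, ?_⟩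
    rw [hLrec (k + 1) (by omega), show k + 1 + 1 = k + 2 by omega, h1, h2,
      show k + 1 + 3 = k + 4 by omega]
    have f := fibrec (k + 2)
    have f' := fibrec (k + 1)
    rw [show k + 2 + 2 = k + 4 by omega, show k + 2 + 1 = k + 3 by omega] at f
    rw [show k + 1 + 2 = k + 3 by omega, show k + 1 + 1 = k + 2 by omega] at f'
    have f'' := fibrec k
    omega

private lemma sumL (L : ℕ → ℕ) (hL1 : L 1 = 1) (hL2 : L 2 = 3)
    (hLrec : ∀ m : ℕ, 1 ≤ m → L (m + 2) = L (m + 1) + L m) :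
    ∀ k : ℕ, ∑ i ∈ Finset.Icc 3 (k + 3), (L (i - 2) : ℤ)
      = Nat.fib (k + 4) + Nat.fib (k + 2) - 3 := by
  intro k
  induction k with
  | zero =>
    simp [hL1]
    norm_num [show Nat.fib 4 = 3 from rfl]
  | succ k ih =>
    rw [show k + 1 + 3 = (k + 3) + 1 by omega,
      Finset.sum_Icc_succ_top (by omega : 3 ≤ (k + 3) + 1), ih,
      show (k + 3) + 1 - 2 = k + 2 by omega, (Lfib L hL1 hL2 hLrec k).2,
      show k + 1 + 4 = k + 5 by omega, show k + 1 + 2 = k + 3 by omega]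
    have f1 := fibrec (k + 3)
    have f2 := fibrec (k + 1)
    rw [show k + 3 + 2 = k + 5 by omega, show k + 3 + 1 = k + 4 by omega] at f1
    rw [show k + 1 + 2 = k + 3 by omega, show k + 1 + 1 = k + 2 by omega] at f2
    push_cast [f1, f2]
    ring

/-- The weighted external path length of the left-sided elongated tree with leaf weights
1, 1, L(1), ..., L(n-2) equals F(n+3) + F(n+1) - (n+3). -/
theorem min_zero_ordered_huffman_cost (L : ℕ → ℕ)
    (hL1 : L 1 = 1) (hL2 : L 2 = 3)
    (hLrec : ∀ m : ℕ, 1 ≤ m → L (m + 2) = L (m + 1) + L m)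
    (n : ℕ) (hn : 3 ≤ n) :
    ((n : ℤ) - 1) * 1 + ((n : ℤ) - 1) * 1
        + ∑ i ∈ Finset.Icc 3 n, ((n : ℤ) - i + 1) * L (i - 2)
      = (Nat.fib (n + 3) : ℤ) + Nat.fib (n + 1) - (n + 3) := by
  obtain ⟨k, rfl⟩ : ∃ k, n = k + 3 := ⟨n - 3, by omega⟩
  clear hn
  induction k with
  | zero =>
    norm_num [Finset.Icc_self, hL1, show Nat.fib 6 = 8 from rfl, show Nat.fib 4 = 3 from rfl]
  | succ k ih =>
    rw [show k + 1 + 3 = (k + 3) + 1 by omega,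
      Finset.sum_Icc_succ_top (by omega : 3 ≤ (k + 3) + 1)]
    have split : ∑ i ∈ Finset.Icc 3 (k + 3), (((k + 3 + 1 : ℕ) : ℤ) - i + 1) * L (i - 2)
        = (∑ i ∈ Finset.Icc 3 (k + 3), (((k + 3 : ℕ) : ℤ) - i + 1) * L (i - 2))
          + ∑ i ∈ Finset.Icc 3 (k + 3), (L (i - 2) : ℤ) := by
      rw [← Finset.sum_add_distrib]
      apply Finset.sum_congr rfl
      intro i _
      push_cast
      ring
    rw [split, sumL L hL1 hL2 hLrec k,
      show (k + 3) + 1 - 2 = k + 2 by omega, (Lfib L hL1 hL2 hLrec k).2]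
    have f1 := fibrec (k + 5)
    have f2 := fibrec (k + 4)
    have f3 := fibrec (k + 3)
    have f4 := fibrec (k + 2)
    have f5 := fibrec (k + 1)
    rw [show k + 3 + 1 + 3 = k + 7 by omega, show k + 3 + 1 + 1 = k + 5 by omega,
      show k + 5 + 2 = k + 7 by omega, show k + 5 + 1 = k + 6 by omega,
      show k + 4 + 2 = k + 6 by omega, show k + 4 + 1 = k + 5 by omega,
      show k + 3 + 2 = k + 5 by omega, show k + 3 + 1 = k + 4 by omega,
      show k + 2 + 2 = k + 4 by omega, show k + 2 + 1 = k + 3 by omega,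
      show k + 1 + 2 = k + 3 by omega, show k + 1 + 1 = k + 2 by omega] at *
    push_cast at *
    linarith
end
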